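/- Take r = 1/4 (so x = √15/8, y = 1/8) and let Λ be the subgroup of ℤ² generated by (4, −2) and (1, 3), which has index 14 in ℤ². Then the separation of the induced 14-colouring of the tiles T(i, j) equals √19 / 2 (i.e. separation squared equals 19/4), and this value is attained. -/

import Mathlib

noncomputable section

/-- The Euclidean plane ℝ². -/
abbrev Plane := EuclideanSpace ℝ (Fin 2)

/-- The point (a, b) of the Euclidean plane. -/
def pt (a b : ℝ) : Plane := WithLp.toLp 2 ![a, b]

/-- The semi-regular hexagon K(r): with y = r/2 and x = √(1 − r²)/2, the closed convex
hull of the six points (0, 1/2), (x, y), (x, −y), (0, −1/2), (−x, −y), (−x, y). -/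
def hexK (r : ℝ) : Set Plane :=
  convexHull ℝ
    {pt 0 (1 / 2), pt (Real.sqrt (1 - r ^ 2) / 2) (r / 2),
      pt (Real.sqrt (1 - r ^ 2) / 2) (-(r / 2)), pt 0 (-(1 / 2)),
      pt (-(Real.sqrt (1 - r ^ 2) / 2)) (-(r / 2)),
      pt (-(Real.sqrt (1 - r ^ 2) / 2)) (r / 2)}

/-- The center c(i, j) = ((2i + j)·x, j·(y + 1/2)) of the tile with index (i, j). -/
def center (r : ℝ) (i j : ℤ) : Plane :=
  pt ((2 * (i : ℝ) + (j : ℝ)) * (Real.sqrt (1 - r ^ 2) / 2)) ((j : ℝ) * (r / 2 + 1 / 2))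

/-- The tile T(i, j) = c(i, j) + K(r). -/
def tile (r : ℝ) (i j : ℤ) : Set Plane :=
  (fun p => center r i j + p) '' hexK r

/-- The set of distances realized by points in two distinct same-coloured tiles,
for the colouring of the tiles T(i, j) by the cosets of a subgroup Λ ≤ ℤ²:
tiles T(i, j) and T(i', j') get the same colour iff (i − i', j − j') ∈ Λ.
The separation of the colouring is the infimum of this set. -/
def sameColourDists (r : ℝ) (Λ : AddSubgroup (ℤ × ℤ)) : Set ℝ :=
  {d : ℝ | ∃ (i j i' j' : ℤ) (p q : Plane),
    (i, j) ≠ (i', j') ∧ (i - i', j - j') ∈ Λ ∧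
    p ∈ tile r i j ∧ q ∈ tile r i' j' ∧ d = dist p q}

end

noncomputable section
namespace Stmt11Aux

/-- Auxiliary hom for the index computation. -/
def φ : ℤ × ℤ →+ ZMod 14 where
  toFun p := ((11 * p.1 + p.2 : ℤ) : ZMod 14)
  map_zero' := by simp
  map_add' := by intro a b; simp [Prod.fst_add, Prod.snd_add]; ring

lemma closure_eq_ker :
    AddSubgroup.closure {(((4) : ℤ), ((-2) : ℤ)), (((1) : ℤ), ((3) : ℤ))} = φ.ker := by
  apply le_antisymm
  · rw [AddSubgroup.closure_le]
    rintro v (rfl | rfl) <;> simp [AddMonoidHom.mem_ker, φ] <;> decide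
  · rintro ⟨i, j⟩ hv
    have h0 : ((11 * i + j : ℤ) : ZMod 14) = 0 := AddMonoidHom.mem_ker.mp hv
    obtain ⟨k, hk⟩ := (ZMod.intCast_zmod_eq_zero_iff_dvd _ 14).mp h0
    have h1 : ((4:ℤ), (-2:ℤ)) ∈ AddSubgroup.closure {(((4) : ℤ), ((-2) : ℤ)), (((1) : ℤ), ((3) : ℤ))} :=
      AddSubgroup.subset_closure (by simp)
    have h2 : ((1:ℤ), (3:ℤ)) ∈ AddSubgroup.closure {(((4) : ℤ), ((-2) : ℤ)), (((1) : ℤ), ((3) : ℤ))} :=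
      AddSubgroup.subset_closure (by simp)
    have key : (i, j) = (i - k) • ((4:ℤ), (-2:ℤ)) + (4*k - 3*i) • ((1:ℤ), (3:ℤ)) := by
      ext <;> simp [Prod.smul_def, smul_eq_mul] <;> omega
    rw [key]
    exact AddSubgroup.add_mem _ (AddSubgroup.zsmul_mem _ h1 _) (AddSubgroup.zsmul_mem _ h2 _)

lemma index14 :
    (AddSubgroup.closure {(((4) : ℤ), ((-2) : ℤ)), (((1) : ℤ), ((3) : ℤ))}).index = 14 := by
  rw [closure_eq_ker, AddSubgroup.index_ker]
  have hsurj : Function.Surjective φ := by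
    intro x
    obtain ⟨n, rfl⟩ := ZMod.intCast_surjective x
    exact ⟨(0, n), by simp [φ]⟩
  rw [AddMonoidHom.range_eq_top.mpr hsurj,
    Nat.card_congr (AddSubgroup.topEquiv.toEquiv)]
  simp [Nat.card_eq_fintype_card]

lemma pt_inner (u1 u2 a b : ℝ) :
    (inner ℝ (pt u1 u2) (pt a b) : ℝ) = u1*a + u2*b := by
  simp [pt, PiLp.inner_apply, Fin.sum_univ_two, RCLike.inner_apply]; ring

lemma pt_norm (a b : ℝ) : ‖pt a b‖ = Real.sqrt (a^2 + b^2) := by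
  rw [EuclideanSpace.norm_eq]
  congr 1
  simp [pt, Fin.sum_univ_two, sq_abs]

lemma pt_norm_sq (a b : ℝ) : ‖pt a b‖^2 = a^2 + b^2 := by
  rw [pt_norm, Real.sq_sqrt (by positivity)]

lemma pt_add (a b c d : ℝ) : pt a b + pt c d = pt (a+c) (b+d) := by
  ext k; fin_cases k <;> simp [pt]

lemma pt_sub (a b c d : ℝ) : pt a b - pt c d = pt (a-c) (b-d) := by
  ext k; fin_cases k <;> simp [pt]

lemma hs14 : Real.sqrt (1 - (1/4:ℝ)^2) = Real.sqrt 15 / 4 := by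
  have h15 := Real.sq_sqrt (show (0:ℝ) ≤ 15 by norm_num)
  have h : (1 - (1/4:ℝ)^2) = (Real.sqrt 15/4)^2 := by nlinarith [h15]
  rw [h, Real.sqrt_sq (by positivity)]

lemma hss14 : (Real.sqrt (1 - (1/4:ℝ)^2))^2 = 15/16 := by
  rw [hs14, div_pow, Real.sq_sqrt (show (0:ℝ) ≤ 15 by norm_num)]; norm_num

lemma abs_inner_le_of_mem_hull {S : Set Plane} {u : Plane} {h : ℝ}
    (hS : ∀ v ∈ S, |(inner ℝ u v : ℝ)| ≤ h) {z : Plane} (hz : z ∈ convexHull ℝ S) :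
    |(inner ℝ u z : ℝ)| ≤ h := by
  have hconv : Convex ℝ {w : Plane | |(inner ℝ u w : ℝ)| ≤ h} := by
    have := (convex_Icc (-h) h).linear_preimage ((innerSL ℝ u).toLinearMap)
    have e : {w : Plane | |(inner ℝ u w : ℝ)| ≤ h} = (innerSL ℝ u).toLinearMap ⁻¹' Set.Icc (-h) h := by
      ext w
      simp [abs_le, Set.mem_preimage]
    rw [e]; exact this
  exact convexHull_min hS hconv hz

lemma hex_bound (u1 u2 h : ℝ)
    (H1 : |u2/2| ≤ h)
    (H2 : |u1 * (Real.sqrt 15/8) + u2/8| ≤ h)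
    (H3 : |u1 * (Real.sqrt 15/8) - u2/8| ≤ h) :
    ∀ z ∈ hexK (1/4), |(inner ℝ (pt u1 u2) z : ℝ)| ≤ h := by
  intro z hz
  rw [hexK] at hz
  refine abs_inner_le_of_mem_hull ?_ hz
  intro v hv
  simp only [Set.mem_insert_iff, Set.mem_singleton_iff] at hv
  rcases hv with rfl|rfl|rfl|rfl|rfl|rfl <;> rw [pt_inner]
  · have e : u1 * 0 + u2 * (1 / 2) = u2/2 := by ring
    rw [e]; exact H1
  · rw [hs14]
    have e : u1 * (Real.sqrt 15 / 4 / 2) + u2 * (1 / 4 / 2) = u1 * (Real.sqrt 15/8) + u2/8 := by ring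
    rw [e]; exact H2
  · rw [hs14]
    have e : u1 * (Real.sqrt 15 / 4 / 2) + u2 * -(1 / 4 / 2) = u1 * (Real.sqrt 15/8) - u2/8 := by ring
    rw [e]; exact H3
  · have e : u1 * 0 + u2 * -(1 / 2) = -(u2/2) := by ring
    rw [e, abs_neg]; exact H1
  · rw [hs14]
    have e : u1 * -(Real.sqrt 15 / 4 / 2) + u2 * -(1 / 4 / 2) = -(u1 * (Real.sqrt 15/8) + u2/8) := by ring
    rw [e, abs_neg]; exact H2
  · rw [hs14]
    have e : u1 * -(Real.sqrt 15 / 4 / 2) + u2 * (1 / 4 / 2) = -(u1 * (Real.sqrt 15/8) - u2/8) := by ring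
    rw [e, abs_neg]; exact H3

lemma norm_le_of_mem_hull {S : Set Plane} {R : ℝ}
    (hS : ∀ v ∈ S, ‖v‖ ≤ R) {z : Plane} (hz : z ∈ convexHull ℝ S) : ‖z‖ ≤ R := by
  have h2 : S ⊆ Metric.closedBall 0 R := by
    intro v hv; simpa [Metric.mem_closedBall, dist_eq_norm] using hS v hv
  have := convexHull_min h2 (convex_closedBall (0:Plane) R) hz
  simpa [Metric.mem_closedBall, dist_eq_norm] using this

lemma hex_norm_bound : ∀ z ∈ hexK (1/4), ‖z‖ ≤ 1/2 := by
  intro z hz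
  rw [hexK] at hz
  refine norm_le_of_mem_hull ?_ hz
  intro v hv
  simp only [Set.mem_insert_iff, Set.mem_singleton_iff] at hv
  have hhalf : Real.sqrt (1/4 : ℝ) = 1/2 := by
    rw [show (1/4:ℝ) = (1/2)^2 by norm_num, Real.sqrt_sq (by norm_num)]
  rcases hv with rfl|rfl|rfl|rfl|rfl|rfl <;>
    rw [pt_norm] <;>
    refine le_trans (Real.sqrt_le_sqrt ?_) (le_of_eq hhalf) <;> nlinarith [hss14]

lemma dist_ge_of_functional (cp cq p₀ q₀ u : Plane) (h N : ℝ)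
    (hu : 0 < ‖u‖)
    (hp : |(inner ℝ u p₀ : ℝ)| ≤ h) (hq : |(inner ℝ u q₀ : ℝ)| ≤ h)
    (hval : N * ‖u‖ ≤ (inner ℝ u (cp - cq) : ℝ) - 2*h) :
    N ≤ dist (cp + p₀) (cq + q₀) := by
  have hCS : (inner ℝ u ((cp + p₀) - (cq + q₀)) : ℝ) ≤ ‖u‖ * dist (cp + p₀) (cq + q₀) := by
    rw [dist_eq_norm]; exact real_inner_le_norm u _
  have hexp : (inner ℝ u ((cp + p₀) - (cq + q₀)) : ℝ)
      = (inner ℝ u (cp - cq) : ℝ) + (inner ℝ u p₀ : ℝ) - (inner ℝ u q₀ : ℝ) := by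
    rw [show (cp + p₀) - (cq + q₀) = (cp - cq) + p₀ - q₀ by abel,
      inner_sub_right, inner_add_right]
  have h1 := abs_le.mp hp
  have h2 := abs_le.mp hq
  have key : N * ‖u‖ ≤ dist (cp + p₀) (cq + q₀) * ‖u‖ := by nlinarith
  exact le_of_mul_le_mul_right key hu

lemma small_case {cp cq p₀ q₀ : Plane} (u1 u2 h V : ℝ)
    (hp₀ : p₀ ∈ hexK (1/4)) (hq₀ : q₀ ∈ hexK (1/4))
    (hnsq : ‖pt u1 u2‖^2 = V) (hV : 0 < V)
    (H1 : |u2/2| ≤ h) (H2 : |u1 * (Real.sqrt 15/8) + u2/8| ≤ h)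
    (H3 : |u1 * (Real.sqrt 15/8) - u2/8| ≤ h)
    (hval : Real.sqrt 19/2 * ‖pt u1 u2‖ ≤ (inner ℝ (pt u1 u2) (cp - cq) : ℝ) - 2*h) :
    Real.sqrt 19/2 ≤ dist (cp + p₀) (cq + q₀) :=
  dist_ge_of_functional cp cq p₀ q₀ (pt u1 u2) h _
    (by nlinarith [norm_nonneg (pt u1 u2)])
    (hex_bound u1 u2 h H1 H2 H3 p₀ hp₀) (hex_bound u1 u2 h H1 H2 H3 q₀ hq₀) hval

lemma dist_ge_of_far (cp cq p₀ q₀ : Plane) (N : ℝ)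
    (hp : ‖p₀‖ ≤ 1/2) (hq : ‖q₀‖ ≤ 1/2) (hfar : N + 1 ≤ ‖cp - cq‖) :
    N ≤ dist (cp + p₀) (cq + q₀) := by
  have h1 : ‖cp - cq‖ ≤ ‖(cp + p₀) - (cq + q₀)‖ + ‖p₀‖ + ‖q₀‖ := by
    have e : cp - cq = ((cp + p₀) - (cq + q₀)) - p₀ + q₀ := by abel
    calc ‖cp - cq‖ = ‖((cp + p₀) - (cq + q₀)) - p₀ + q₀‖ := by rw [← e]
      _ ≤ ‖((cp + p₀) - (cq + q₀)) - p₀‖ + ‖q₀‖ := norm_add_le _ _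
      _ ≤ ‖(cp + p₀) - (cq + q₀)‖ + ‖p₀‖ + ‖q₀‖ := by
          linarith [norm_sub_le ((cp + p₀) - (cq + q₀)) p₀]
  rw [dist_eq_norm]
  linarith

lemma le_of_sq_le_sq {N x : ℝ} (hN : 0 ≤ N) (hx : 0 ≤ x) (h : N^2 ≤ x^2) : N ≤ x := by
  calc N = Real.sqrt (N^2) := (Real.sqrt_sq hN).symm
    _ ≤ Real.sqrt (x^2) := Real.sqrt_le_sqrt h
    _ = x := Real.sqrt_sq hx

lemma sqrt19_mul_le304 (x : ℝ) (hx2 : x^2 = 304) :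
    Real.sqrt 19/2 * x ≤ 38 := by
  have hw := Real.sq_sqrt (show (0:ℝ) ≤ 19 by norm_num)
  have hw0 := Real.sqrt_nonneg 19
  nlinarith [sq_nonneg (Real.sqrt 19 * x - 76)]

lemma sqrt19_mul_le19 (x : ℝ) (hx2 : x^2 = 19) :
    Real.sqrt 19/2 * x ≤ 19/2 := by
  have hw := Real.sq_sqrt (show (0:ℝ) ≤ 19 by norm_num)
  have hw0 := Real.sqrt_nonneg 19
  nlinarith [sq_nonneg (Real.sqrt 19 - x)]

lemma mem_hexK_v2 : pt (Real.sqrt (1 - (1/4:ℝ)^2) / 2) ((1:ℝ)/4 / 2) ∈ hexK (1/4) := by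
  rw [hexK]
  exact subset_convexHull ℝ _ (by norm_num [Set.mem_insert_iff])

lemma mem_hexK_v5 : pt (-(Real.sqrt (1 - (1/4:ℝ)^2) / 2)) (-((1:ℝ)/4 / 2)) ∈ hexK (1/4) := by
  rw [hexK]
  exact subset_convexHull ℝ _ (by norm_num [Set.mem_insert_iff])

end Stmt11Aux
end

open Stmt11Aux in
set_option maxHeartbeats 1000000 in
/-- with r = 1/4 and Λ = ⟨(4, -2), (1, 3)⟩ ≤ ℤ² of index 14,
the separation of the induced 14-colouring of the tiles T(i, j) equals the stated
value, and this value is attained. -/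
theorem statement11 :
    (AddSubgroup.closure {(((4) : ℤ), ((-2) : ℤ)), (((1) : ℤ), ((3) : ℤ))}).index = 14 ∧
    IsLeast
      (sameColourDists (1 / 4)
        (AddSubgroup.closure {(((4) : ℤ), ((-2) : ℤ)), (((1) : ℤ), ((3) : ℤ))}))
      (Real.sqrt 19 / 2) := by
  have ht : Real.sqrt 15 ^ 2 = 15 := Real.sq_sqrt (by norm_num)
  have ht0 : (0:ℝ) ≤ Real.sqrt 15 := Real.sqrt_nonneg 15
  refine ⟨index14, ?_, ?_⟩
  · -- membership: the value √19/2 is attained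
    refine ⟨1, 3, 0, 0,
      center (1/4) 1 3 + pt (-(Real.sqrt (1 - (1/4:ℝ)^2) / 2)) (-((1:ℝ)/4 / 2)),
      center (1/4) 0 0 + pt (Real.sqrt (1 - (1/4:ℝ)^2) / 2) ((1:ℝ)/4 / 2),
      by simp, ?_, ⟨_, mem_hexK_v5, rfl⟩, ⟨_, mem_hexK_v2, rfl⟩, ?_⟩
    · simpa using AddSubgroup.subset_closure (by simp :
        (((1:ℤ), (3:ℤ)) ∈ ({(((4) : ℤ), ((-2) : ℤ)), (((1) : ℤ), ((3) : ℤ))} : Set (ℤ × ℤ))))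
    · rw [dist_eq_norm]
      have e : (center (1/4) 1 3 + pt (-(Real.sqrt (1 - (1/4:ℝ)^2) / 2)) (-((1:ℝ)/4 / 2)))
          - (center (1/4) 0 0 + pt (Real.sqrt (1 - (1/4:ℝ)^2) / 2) ((1:ℝ)/4 / 2))
          = pt (3 * Real.sqrt 15 / 8) (13/8) := by
        simp only [center, hs14, pt_add, pt_sub]
        exact congrArg₂ pt (by push_cast; ring) (by push_cast; ring)
      rw [e, pt_norm]
      rw [show (3 * Real.sqrt 15 / 8)^2 + (13/8:ℝ)^2 = 19/4 by nlinarith [ht]]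
      rw [show (19/4:ℝ) = (Real.sqrt 19 / 2)^2 by
            rw [div_pow, Real.sq_sqrt (show (0:ℝ) ≤ 19 by norm_num)]; norm_num,
        Real.sqrt_sq (by positivity)]
  · -- lower bound
    rintro d ⟨i, j, i', j', p, q, hne, hΛ, hp, hq, rfl⟩
    obtain ⟨p₀, hp₀, rfl⟩ := hp
    obtain ⟨q₀, hq₀, rfl⟩ := hq
    obtain ⟨a, b, hab⟩ := AddSubgroup.mem_closure_pair.mp hΛ
    have hm : i - i' = 4*a + b := by
      have h := congrArg Prod.fst hab
      simp [Prod.smul_def, smul_eq_mul] at h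
      omega
    have hn : j - j' = -2*a + 3*b := by
      have h := congrArg Prod.snd hab
      simp [Prod.smul_def, smul_eq_mul] at h
      omega
    have hab0 : ¬(a = 0 ∧ b = 0) := by
      rintro ⟨rfl, rfl⟩
      refine hne (Prod.ext_iff.mpr ⟨by omega, by omega⟩)
    have hm' : ((i:ℝ) - (i':ℝ)) = 4*(a:ℝ) + (b:ℝ) := by exact_mod_cast hm
    have hn' : ((j:ℝ) - (j':ℝ)) = -2*(a:ℝ) + 3*(b:ℝ) := by exact_mod_cast hn
    have hcsub : center (1/4) i j - center (1/4) i' j'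
        = pt ((6*(a:ℝ)+5*(b:ℝ)) * (Real.sqrt 15/8)) ((-2*(a:ℝ)+3*(b:ℝ))*(5/8)) := by
      simp only [center, hs14, pt_sub]
      exact congrArg₂ pt
        (by linear_combination (Real.sqrt 15/8) * (2*hm' + hn'))
        (by linear_combination (5/8) * hn')
    by_cases hsmall : (a = 1 ∧ b = 0) ∨ (a = -1 ∧ b = 0) ∨ (a = 0 ∧ b = 1) ∨
        (a = 0 ∧ b = -1) ∨ (a = 1 ∧ b = -1) ∨ (a = -1 ∧ b = 1)
    · rcases hsmall with ⟨rfl, rfl⟩|⟨rfl, rfl⟩|⟨rfl, rfl⟩|⟨rfl, rfl⟩|⟨rfl, rfl⟩|⟨rfl, rfl⟩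
      · -- (a,b) = (1,0), u = (√15, -2), h = 17/8, ‖u‖² = 19
        have hn2 : ‖pt (Real.sqrt 15) (-2)‖^2 = 19 := by rw [pt_norm_sq]; nlinarith
        refine small_case (Real.sqrt 15) (-2) (17/8) 19 hp₀ hq₀ hn2 (by norm_num)
          (by rw [abs_le]; constructor <;> norm_num)
          (by rw [abs_le]; constructor <;> nlinarith)
          (by rw [abs_le]; constructor <;> nlinarith) ?_
        rw [hcsub, pt_inner]
        calc Real.sqrt 19/2 * ‖pt (Real.sqrt 15) (-2)‖ ≤ 19/2 := sqrt19_mul_le19 _ hn2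
          _ ≤ _ := by push_cast; nlinarith
      · -- (a,b) = (-1,0), u = (-√15, 2)
        have hn2 : ‖pt (-Real.sqrt 15) 2‖^2 = 19 := by rw [pt_norm_sq]; nlinarith
        refine small_case (-Real.sqrt 15) 2 (17/8) 19 hp₀ hq₀ hn2 (by norm_num)
          (by rw [abs_le]; constructor <;> nlinarith)
          (by rw [abs_le]; constructor <;> nlinarith)
          (by rw [abs_le]; constructor <;> nlinarith) ?_
        rw [hcsub, pt_inner]
        calc Real.sqrt 19/2 * ‖pt (-Real.sqrt 15) 2‖ ≤ 19/2 := sqrt19_mul_le19 _ hn2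
          _ ≤ _ := by push_cast; nlinarith
      · -- (a,b) = (0,1), u = (3√15, 13), h = 29/4, ‖u‖² = 304
        have hn2 : ‖pt (3*Real.sqrt 15) 13‖^2 = 304 := by rw [pt_norm_sq]; nlinarith
        refine small_case (3*Real.sqrt 15) 13 (29/4) 304 hp₀ hq₀ hn2 (by norm_num)
          (by rw [abs_le]; constructor <;> nlinarith)
          (by rw [abs_le]; constructor <;> nlinarith)
          (by rw [abs_le]; constructor <;> nlinarith) ?_
        rw [hcsub, pt_inner]
        calc Real.sqrt 19/2 * ‖pt (3*Real.sqrt 15) 13‖ ≤ 38 := sqrt19_mul_le304 _ hn2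
          _ ≤ _ := by push_cast; nlinarith
      · -- (a,b) = (0,-1), u = (-3√15, -13)
        have hn2 : ‖pt (-(3*Real.sqrt 15)) (-13)‖^2 = 304 := by rw [pt_norm_sq]; nlinarith
        refine small_case (-(3*Real.sqrt 15)) (-13) (29/4) 304 hp₀ hq₀ hn2 (by norm_num)
          (by rw [abs_le]; constructor <;> nlinarith)
          (by rw [abs_le]; constructor <;> nlinarith)
          (by rw [abs_le]; constructor <;> nlinarith) ?_
        rw [hcsub, pt_inner]
        calc Real.sqrt 19/2 * ‖pt (-(3*Real.sqrt 15)) (-13)‖ ≤ 38 := sqrt19_mul_le304 _ hn2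
          _ ≤ _ := by push_cast; nlinarith
      · -- (a,b) = (1,-1), u = (√15, -17), h = 17/2, ‖u‖² = 304
        have hn2 : ‖pt (Real.sqrt 15) (-17)‖^2 = 304 := by rw [pt_norm_sq]; nlinarith
        refine small_case (Real.sqrt 15) (-17) (17/2) 304 hp₀ hq₀ hn2 (by norm_num)
          (by rw [abs_le]; constructor <;> norm_num)
          (by rw [abs_le]; constructor <;> nlinarith)
          (by rw [abs_le]; constructor <;> nlinarith) ?_
        rw [hcsub, pt_inner]
        calc Real.sqrt 19/2 * ‖pt (Real.sqrt 15) (-17)‖ ≤ 38 := sqrt19_mul_le304 _ hn2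
          _ ≤ _ := by push_cast; nlinarith
      · -- (a,b) = (-1,1), u = (-√15, 17)
        have hn2 : ‖pt (-Real.sqrt 15) 17‖^2 = 304 := by rw [pt_norm_sq]; nlinarith
        refine small_case (-Real.sqrt 15) 17 (17/2) 304 hp₀ hq₀ hn2 (by norm_num)
          (by rw [abs_le]; constructor <;> norm_num)
          (by rw [abs_le]; constructor <;> nlinarith)
          (by rw [abs_le]; constructor <;> nlinarith) ?_
        rw [hcsub, pt_inner]
        calc Real.sqrt 19/2 * ‖pt (-Real.sqrt 15) 17‖ ≤ 38 := sqrt19_mul_le304 _ hn2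
          _ ≤ _ := by push_cast; nlinarith
    · -- large case
      have hq17 : (17:ℤ) ≤ 16*a^2 + 15*a*b + 15*b^2 := by
        have hb5 : b ≤ -2 ∨ b = -1 ∨ b = 0 ∨ b = 1 ∨ 2 ≤ b := by omega
        rcases hb5 with hb|rfl|rfl|rfl|hb
        · nlinarith [sq_nonneg (32*a + 15*b), hb, sq_nonneg a]
        · have ha : a ≤ -1 ∨ 2 ≤ a := by omega
          rcases ha with ha|ha <;> nlinarith
        · have ha : a ≤ -2 ∨ 2 ≤ a := by omega
          rcases ha with ha|ha <;> nlinarith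
        · have ha : a ≤ -2 ∨ 1 ≤ a := by omega
          rcases ha with ha|ha <;> nlinarith
        · nlinarith [sq_nonneg (32*a + 15*b), hb, sq_nonneg a]
      have hq17' : (17:ℝ) ≤ 16*(a:ℝ)^2 + 15*(a:ℝ)*(b:ℝ) + 15*(b:ℝ)^2 := by exact_mod_cast hq17
      have hC2 : (85:ℝ)/8 ≤ ‖center (1/4) i j - center (1/4) i' j'‖^2 := by
        rw [hcsub, pt_norm_sq]
        nlinarith [ht, hq17', sq_nonneg (6*(a:ℝ)+5*(b:ℝ)), sq_nonneg (-2*(a:ℝ)+3*(b:ℝ))]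
      refine dist_ge_of_far _ _ _ _ _ (hex_norm_bound p₀ hp₀) (hex_norm_bound q₀ hq₀) ?_
      have hw := Real.sq_sqrt (show (0:ℝ) ≤ 19 by norm_num)
      have hw0 := Real.sqrt_nonneg 19
      have hw39 : Real.sqrt 19 ≤ 39/8 := by nlinarith [sq_nonneg (Real.sqrt 19 - 39/8)]
      refine le_of_sq_le_sq (by positivity) (norm_nonneg _) ?_
      nlinarith [hC2, hw, hw39]
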